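/- If G is a connected finite simple graph of order n with maximum degree Δ(G) ≥ n − 2, then χ_md(G) = χ(G). -/
import Mathlib


open SimpleGraph

/-- A majority dominator coloring: a proper coloring such that every vertex `v`
dominates at least half of some (nonempty) color class, i.e. there is a color class `C`
with `|C| ≤ 2 * |C ∩ N[v]|`. -/
def SimpleGraph.IsMajorityDominatorColoring {V : Type*} (G : SimpleGraph V) {k : ℕ}
    (c : V → Fin k) : Prop :=
  (∀ u v, G.Adj u v → c u ≠ c v) ∧
  ∀ v : V, ∃ i : Fin k,
    {u | c u = i}.Nonempty ∧
    {u | c u = i}.ncard ≤ 2 * {u | c u = i ∧ (u = v ∨ G.Adj v u)}.ncard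

/-- The majority dominator chromatic number. -/
noncomputable def SimpleGraph.majorityDominatorChromaticNumber {V : Type*}
    (G : SimpleGraph V) : ℕ :=
  sInf {k | ∃ c : V → Fin k, G.IsMajorityDominatorColoring c}

theorem md_eq_chromatic_of_maxDegree_ge_card_sub_two {V : Type*} [Fintype V]
    (G : SimpleGraph V) [DecidableRel G.Adj] (hG : G.Connected)
    (hΔ : Fintype.card V - 2 ≤ G.maxDegree) :
    (G.majorityDominatorChromaticNumber : ℕ∞) = G.chromaticNumber := by
  classical
  have hne : Nonempty V := hG.nonempty
  obtain ⟨w, hw⟩ := G.exists_maximal_degree_vertex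
  have hdeg : Fintype.card V - 2 ≤ G.degree w := hw ▸ hΔ
  -- the set of "non-neighbors" of `w` (including `w`) has at most 2 elements
  set Cset : Set V := {x | ¬ G.Adj w x} with hCset
  have hCcard : Cset.ncard ≤ 2 := by
    have h1 : Cset.toFinset = (G.neighborFinset w)ᶜ := by
      ext x; simp [hCset]
    have h2 : Cset.ncard = Fintype.card V - G.degree w := by
      rw [Set.ncard_eq_toFinset_card', h1, Finset.card_compl, G.card_neighborFinset_eq_degree]
    omega
  -- key equivalence: existence of a majority dominator `k`-coloring ↔ `k`-colorability
  have key : ∀ k : ℕ, (∃ c : V → Fin k, G.IsMajorityDominatorColoring c) ↔ G.Colorable k := by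
    intro k
    constructor
    · rintro ⟨c, hc, -⟩
      exact ⟨SimpleGraph.Coloring.mk c fun {u v} h => hc u v h⟩
    · rintro ⟨C⟩
      set c' : V → Fin k := fun x => if G.Adj w x then C x else C w with hc'
      have hc'pos : ∀ x, G.Adj w x → c' x = C x := fun x hx => by simp [hc', hx]
      have hc'neg : ∀ x, ¬ G.Adj w x → c' x = C w := fun x hx => by simp [hc', hx]
      refine ⟨c', ?_, ?_⟩
      · -- properness
        intro u v huv h
        by_cases hu : G.Adj w u <;> by_cases hv : G.Adj w v
        · rw [hc'pos u hu, hc'pos v hv] at h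
          exact C.valid huv h
        · rw [hc'pos u hu, hc'neg v hv] at h
          exact C.valid (G.adj_symm hu) h
        · rw [hc'neg u hu, hc'pos v hv] at h
          exact C.valid hv h
        · -- both `u, v` non-adjacent to `w`, but `u ~ v`: impossible
          have hu' : u ∈ Cset := hu
          have hv' : v ∈ Cset := hv
          have hw' : w ∈ Cset := by simp [hCset]
          rcases eq_or_ne u w with rfl | huw
          · exact hv huv
          rcases eq_or_ne v w with rfl | hvw
          · exact hu (G.adj_symm huv)
          have hsub : ({w, u, v} : Set V).ncard ≤ 2 := by
            refine le_trans (Set.ncard_le_ncard ?_ Cset.toFinite) hCcard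
            intro x hx
            rcases hx with rfl | rfl | rfl
            · exact hw'
            · exact hu'
            · exact hv'
          have h3 : ({w, u, v} : Set V).ncard = 3 := by
            rw [Set.ncard_insert_of_notMem (by simp [huw.symm, hvw.symm]),
              Set.ncard_insert_of_notMem (by simp [G.ne_of_adj huv]), Set.ncard_singleton]
          omega
      · -- domination
        intro v
        refine ⟨C w, ?_, ?_⟩
        · exact ⟨w, hc'neg w (G.irrefl)⟩
        · have hclass : {u | c' u = C w} = Cset := by
            ext x
            rw [Set.mem_setOf_eq, hCset, Set.mem_setOf_eq]
            by_cases hx : G.Adj w x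
            · rw [hc'pos x hx]
              exact ⟨fun h => absurd h.symm (C.valid hx), fun h => absurd hx h⟩
            · rw [hc'neg x hx]
              simp [hx]
          rw [hclass]
          have hTne : {u | c' u = C w ∧ (u = v ∨ G.Adj v u)}.Nonempty := by
            by_cases hv : G.Adj w v
            · exact ⟨w, hc'neg w G.irrefl, Or.inr (G.adj_symm hv)⟩
            · exact ⟨v, hc'neg v hv, Or.inl rfl⟩
          have hpos : 0 < {u | c' u = C w ∧ (u = v ∨ G.Adj v u)}.ncard :=
            (Set.ncard_pos (Set.toFinite _)).mpr hTne
          omega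
  -- conclude
  have hcol : G.Colorable (Fintype.card V) := G.colorable_of_fintype
  rw [hcol.chromaticNumber_eq_sInf]
  have hset : {k : ℕ | ∃ c : V → Fin k, G.IsMajorityDominatorColoring c}
      = {n' : ℕ | G.Colorable n'} := Set.ext key
  rw [SimpleGraph.majorityDominatorChromaticNumber, hset]
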